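/- For n ≥ 3 and i ≥ 1, the number of independent sets of size i in the cycle graph C_n equals (n/i) · C(n-i-1, i-1) if n ≥ 2i, and 0 otherwise. -/

import Mathlib

open Finset SimpleGraph

noncomputable def numIndep {V : Type*} [Fintype V] (G : SimpleGraph V) (i : ℕ) : ℕ :=
  Set.ncard {s : Finset V | s.card = i ∧ ∀ a ∈ s, ∀ b ∈ s, ¬ G.Adj a b}

noncomputable def indepNum {V : Type*} [Fintype V] (G : SimpleGraph V) : ℕ :=
  sSup {i | ∃ s : Finset V, s.card = i ∧ ∀ a ∈ s, ∀ b ∈ s, ¬ G.Adj a b}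


def pathSets (m i : ℕ) : Finset (Finset ℕ) :=
  ((range m).powerset).filter fun s => s.card = i ∧ ∀ x ∈ s, x + 1 ∉ s

lemma mem_pathSets {m i : ℕ} {s : Finset ℕ} :
    s ∈ pathSets m i ↔ s ⊆ range m ∧ s.card = i ∧ ∀ x ∈ s, x + 1 ∉ s := by
  simp [pathSets]

lemma pathSets_zero (m : ℕ) : pathSets m 0 = {∅} := by
  ext s
  simp only [mem_pathSets, Finset.card_eq_zero, mem_singleton]
  constructor
  · rintro ⟨-, h, -⟩; exact h
  · rintro rfl; simp

theorem pathSets_card : ∀ m i : ℕ, (pathSets m i).card = (m + 1 - i).choose i := by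
  intro m
  induction m using Nat.strong_induction_on with
  | _ m ih =>
    match m with
    | 0 =>
      rintro (_ | j)
      · simp [pathSets_zero]
      · have h : pathSets 0 (j + 1) = ∅ := by
          ext s
          simp only [mem_pathSets, range_zero, Finset.subset_empty, Finset.notMem_empty,
            iff_false, not_and]
          rintro rfl; simp
        rw [h, show (0 + 1 - (j + 1) : ℕ) = 0 by omega]
        simp
    | 1 =>
      rintro (_ | _ | j)
      · simp [pathSets_zero]
      · have h : pathSets 1 1 = {{0}} := by
          ext s
          simp only [mem_pathSets, mem_singleton]
          constructor
          · rintro ⟨hsub, hcard, -⟩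
            obtain ⟨a, rfl⟩ := Finset.card_eq_one.mp hcard
            have := hsub (mem_singleton_self a)
            simp only [mem_range] at this
            have : a = 0 := by omega
            subst this; rfl
          · rintro rfl
            exact ⟨by simp, by simp, by simp⟩
        rw [h]; simp
      · have h : pathSets 1 (j + 2) = ∅ := by
          ext s
          simp only [mem_pathSets, Finset.notMem_empty, iff_false, not_and]
          intro hsub hcard
          have := Finset.card_le_card hsub
          simp [hcard] at this
        rw [h, show (1 + 1 - (j + 2) : ℕ) = 0 by omega]
        simp
    | (m+2) =>
      rintro (_ | j)
      · simp [pathSets_zero]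
      · -- split on membership of m+1
        have hsplit := Finset.card_filter_add_card_filter_not
          (s := pathSets (m+2) (j+1)) (p := fun s => m + 1 ∈ s)
        have h1 : (pathSets (m+2) (j+1)).filter (fun s => ¬ (m + 1 ∈ s)) =
            pathSets (m+1) (j+1) := by
          ext s
          simp only [Finset.mem_filter, mem_pathSets]
          constructor
          · rintro ⟨⟨hsub, hc, hnc⟩, hm⟩
            refine ⟨fun x hx => ?_, hc, hnc⟩
            have h1 := hsub hx
            simp only [mem_range] at h1 ⊢
            rcases Nat.lt_or_ge x (m+1) with h | h
            · exact h
            · exfalso; apply hm; have : x = m + 1 := by omega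
              rwa [← this]
          · rintro ⟨hsub, hc, hnc⟩
            have hm : m + 1 ∉ s := fun h => by
              have := hsub h; simp at this
            exact ⟨⟨hsub.trans (by intro x; simp only [mem_range]; omega), hc, hnc⟩, hm⟩
        have h2 : ((pathSets (m+2) (j+1)).filter (fun s => m + 1 ∈ s)).card =
            (pathSets m j).card := by
          apply Finset.card_nbij' (fun s => s.erase (m+1)) (fun t => insert (m+1) t)
          · intro s hs
            simp only [Finset.mem_coe, Finset.mem_filter, mem_pathSets] at hs
            obtain ⟨⟨hsub, hc, hnc⟩, hm⟩ := hs
            refine mem_pathSets.mpr ⟨?_, ?_, ?_⟩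
            · intro x hx
              simp only [Finset.mem_erase] at hx
              obtain ⟨hne, hxs⟩ := hx
              have hlt := hsub hxs; simp only [mem_range] at hlt ⊢
              rcases Nat.lt_or_ge x m with h | h
              · exact h
              · exfalso
                have : x = m := by omega
                subst this
                exact hnc _ hxs hm
            · rw [Finset.card_erase_of_mem hm, hc]; omega
            · intro x hx
              simp only [Finset.mem_erase] at hx ⊢
              intro hx1
              exact hnc x hx.2 hx1.2
          · intro t ht
            rw [Finset.mem_coe, mem_pathSets] at ht
            obtain ⟨hsub, hc, hnc⟩ := ht
            have hmt : m + 1 ∉ t := fun h => by have := hsub h; simp at this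
            simp only [Finset.mem_coe, Finset.mem_filter, mem_pathSets]
            refine ⟨⟨?_, ?_, ?_⟩, by simp⟩
            · intro x hx
              simp only [Finset.mem_insert] at hx
              rcases hx with rfl | hx
              · simp
              · have := hsub hx; simp only [mem_range] at this ⊢; omega
            · rw [Finset.card_insert_of_notMem hmt, hc]
            · intro x hx
              simp only [Finset.mem_insert] at hx ⊢
              push_neg
              rcases hx with rfl | hx
              · constructor
                · omega
                · intro h; have := hsub h; simp at this; omega
              · constructor
                · have := hsub hx; simp only [mem_range] at this; omega
                · intro h; exact hnc x hx h
          · intro s hs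
            simp only [Finset.mem_coe, Finset.mem_filter] at hs
            exact Finset.insert_erase hs.2
          · intro t ht
            rw [Finset.mem_coe, mem_pathSets] at ht
            have hmt : m + 1 ∉ t := fun h => by have := ht.1 h; simp at this
            exact Finset.erase_insert hmt
        rw [← hsplit, h1, h2, ih (m+1) (by omega) (j+1), ih m (by omega) j]
        rcases Nat.lt_or_ge (m + 1) j with h | h
        · rw [show (m + 1 + 1 - (j+1) : ℕ) = 0 by omega, show (m + 1 - j : ℕ) = 0 by omega,
            show (m + 2 + 1 - (j+1) : ℕ) = 0 by omega,
            Nat.choose_eq_zero_of_lt (show 0 < j by omega),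
            Nat.choose_eq_zero_of_lt (show 0 < j + 1 by omega)]
        · rw [show (m + 2 + 1 - (j+1) : ℕ) = (m + 1 - j) + 1 by omega,
            show (m + 1 + 1 - (j+1) : ℕ) = m + 1 - j by omega,
            Nat.choose_succ_succ, Nat.add_comm]

def cycNat (n i : ℕ) : Finset (Finset ℕ) :=
  ((range n).powerset).filter fun s =>
    s.card = i ∧ (∀ x ∈ s, x + 1 ∉ s) ∧ ¬(0 ∈ s ∧ n - 1 ∈ s)

lemma mem_cycNat {n i : ℕ} {s : Finset ℕ} :
    s ∈ cycNat n i ↔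
      s ⊆ range n ∧ s.card = i ∧ (∀ x ∈ s, x + 1 ∉ s) ∧ ¬(0 ∈ s ∧ n - 1 ∈ s) := by
  simp [cycNat]

theorem cycNat_card (n i : ℕ) (hn : 3 ≤ n) (hi : 1 ≤ i) :
    (cycNat n i).card = (n - i).choose i + (n - i - 1).choose (i - 1) := by
  have hsplit := Finset.card_filter_add_card_filter_not
    (s := cycNat n i) (p := fun s => n - 1 ∈ s)
  have h1 : (cycNat n i).filter (fun s => ¬ (n - 1 ∈ s)) = pathSets (n - 1) i := by
    ext s
    simp only [Finset.mem_filter, mem_cycNat, mem_pathSets]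
    constructor
    · rintro ⟨⟨hsub, hc, hnc, -⟩, hm⟩
      refine ⟨fun x hx => ?_, hc, hnc⟩
      have h1 := hsub hx
      simp only [mem_range] at h1 ⊢
      rcases Nat.lt_or_ge x (n - 1) with h | h
      · exact h
      · exfalso; apply hm; have hx1 : x = n - 1 := by omega
        rwa [← hx1]
    · rintro ⟨hsub, hc, hnc⟩
      have hm : n - 1 ∉ s := fun h => by
        have := hsub h; simp only [mem_range] at this; omega
      exact ⟨⟨hsub.trans (by intro x; simp only [mem_range]; omega), hc, hnc,
        fun hh => hm hh.2⟩, hm⟩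
  have h2 : ((cycNat n i).filter (fun s => n - 1 ∈ s)).card =
      (pathSets (n - 3) (i - 1)).card := by
    apply Finset.card_nbij' (fun s => (s.erase (n - 1)).image (fun x => x - 1))
      (fun t => insert (n - 1) (t.image (fun x => x + 1)))
    · intro s hs
      simp only [Finset.mem_coe, Finset.mem_filter, mem_cycNat] at hs
      obtain ⟨⟨hsub, hc, hnc, hcyc⟩, hm⟩ := hs
      have h0 : 0 ∉ s := fun h => hcyc ⟨h, hm⟩
      have hn2 : n - 2 ∉ s := fun h => by
        have := hnc _ h
        rw [show n - 2 + 1 = n - 1 by omega] at this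
        exact this hm
      have hbound : ∀ x ∈ s.erase (n - 1), 1 ≤ x ∧ x ≤ n - 3 := by
        intro x hx
        simp only [Finset.mem_erase] at hx
        obtain ⟨hne, hxs⟩ := hx
        have hlt := hsub hxs
        simp only [mem_range] at hlt
        have hne0 : x ≠ 0 := fun h => h0 (h ▸ hxs)
        have hnen2 : x ≠ n - 2 := fun h => hn2 (h ▸ hxs)
        omega
      refine mem_pathSets.mpr ⟨?_, ?_, ?_⟩
      · intro y hy
        simp only [Finset.mem_image] at hy
        obtain ⟨x, hx, rfl⟩ := hy
        have := hbound x hx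
        simp only [mem_range]
        show x - 1 < n - 3
        omega
      · rw [Finset.card_image_of_injOn, Finset.card_erase_of_mem hm, hc]
        intro x hx y hy hxy
        have h1 := hbound x hx
        have h2 := hbound y hy
        have hxy' : x - 1 = y - 1 := hxy
        omega
      · intro y hy hy1
        simp only [Finset.mem_image] at hy hy1
        obtain ⟨a, ha, rfl⟩ := hy
        obtain ⟨b, hb, hab⟩ := hy1
        have h1 := hbound a ha
        have h2 := hbound b hb
        have hba : b = a + 1 := by omega
        simp only [Finset.mem_erase] at ha hb
        exact hnc a ha.2 (hba ▸ hb.2)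
    · intro t ht
      rw [Finset.mem_coe, mem_pathSets] at ht
      obtain ⟨hsub, hc, hnc⟩ := ht
      have htb : ∀ x ∈ t, x < n - 3 := by
        intro x hx; have := hsub hx; simpa [mem_range] using this
      have hnm : n - 1 ∉ t.image (fun x => x + 1) := by
        simp only [Finset.mem_image, not_exists]
        rintro x ⟨hx, hx1⟩
        have := htb x hx; omega
      simp only [Finset.mem_coe, Finset.mem_filter, mem_cycNat]
      refine ⟨⟨?_, ?_, ?_, ?_⟩, by simp⟩
      · intro x hx
        simp only [Finset.mem_insert, Finset.mem_image] at hx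
        simp only [mem_range]
        rcases hx with rfl | ⟨a, ha, rfl⟩
        · omega
        · have := htb a ha; omega
      · rw [Finset.card_insert_of_notMem hnm,
          Finset.card_image_of_injective _ (fun a b => by omega), hc]
        omega
      · intro x hx hx1
        simp only [Finset.mem_insert, Finset.mem_image] at hx hx1
        rcases hx1 with h | ⟨b, hb, hab⟩
        · rcases hx with rfl | ⟨a, ha, rfl⟩
          · omega
          · have := htb a ha; omega
        · rcases hx with rfl | ⟨a, ha, rfl⟩
          · have := htb b hb; omega
          · have hba : b = a + 1 := by omega
            exact hnc a ha (hba ▸ hb)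
      · rintro ⟨h0, -⟩
        simp only [Finset.mem_insert, Finset.mem_image] at h0
        rcases h0 with h | ⟨a, ha, hab⟩
        · omega
        · omega
    · intro s hs
      simp only [Finset.mem_coe, Finset.mem_filter, mem_cycNat] at hs
      obtain ⟨⟨hsub, hc, hnc, hcyc⟩, hm⟩ := hs
      have h0 : 0 ∉ s := fun h => hcyc ⟨h, hm⟩
      beta_reduce
      rw [Finset.image_image]
      have himg : (s.erase (n - 1)).image ((fun x => x + 1) ∘ (fun x => x - 1)) =
          s.erase (n - 1) := by
        rw [show ((fun x => x + 1) ∘ fun x : ℕ => x - 1) = fun x => x - 1 + 1 from rfl]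
        rw [Finset.image_congr (g := id), Finset.image_id]
        intro x hx
        simp only [Finset.mem_erase, Finset.mem_coe] at hx
        have : x ≠ 0 := fun h => h0 (h ▸ hx.2)
        simp only [id]
        omega
      rw [himg, Finset.insert_erase hm]
    · intro t ht
      rw [Finset.mem_coe, mem_pathSets] at ht
      have htb : ∀ x ∈ t, x < n - 3 := by
        intro x hx; have := ht.1 hx; simpa [mem_range] using this
      have hnm : n - 1 ∉ t.image (fun x => x + 1) := by
        simp only [Finset.mem_image, not_exists]
        rintro x ⟨hx, hx1⟩
        have := htb x hx; omega
      beta_reduce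
      rw [Finset.erase_insert hnm, Finset.image_image]
      rw [show ((fun x => x - 1) ∘ fun x : ℕ => x + 1) = fun x : ℕ => x from by
        funext x; simp]
      exact Finset.image_id
  rw [← hsplit, h1, h2, pathSets_card, pathSets_card,
    show n - 1 + 1 - i = n - i by omega,
    show n - 3 + 1 - (i - 1) = n - i - 1 by omega,
    Nat.add_comm]

lemma cyc_adj_iff {k : ℕ} {u v : Fin (k + 3)} :
    (cycleGraph (k + 3)).Adj u v ↔ v = u + 1 ∨ u = v + 1 := by
  rw [cycleGraph_adj (n := k + 1)]
  constructor
  · rintro (h | h)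
    · right; rw [sub_eq_iff_eq_add] at h; exact h.trans (add_comm 1 v)
    · left; rw [sub_eq_iff_eq_add] at h; exact h.trans (add_comm 1 u)
  · rintro (h | h)
    · right; rw [h, add_sub_cancel_left]
    · left; rw [h, add_sub_cancel_left]

lemma fin_succ_val {k : ℕ} (u : Fin (k + 3)) :
    (u + 1).val = (u.val + 1) % (k + 3) := by
  rw [Fin.add_def, Fin.val_one]

theorem numIndep_cycle (k i : ℕ) :
    numIndep (cycleGraph (k + 3)) i = (cycNat (k + 3) i).card := by
  classical
  have hset : {s : Finset (Fin (k + 3)) | s.card = i ∧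
      ∀ a ∈ s, ∀ b ∈ s, ¬ (cycleGraph (k + 3)).Adj a b} =
      ↑((univ : Finset (Finset (Fin (k + 3)))).filter fun s =>
        s.card = i ∧ ∀ a ∈ s, ∀ b ∈ s, ¬ (cycleGraph (k + 3)).Adj a b) := by
    ext s; simp
  rw [numIndep, hset, Set.ncard_coe_finset]
  apply Finset.card_nbij' (fun s => s.image Fin.val)
    (fun t => (univ : Finset (Fin (k + 3))).filter (fun v => v.val ∈ t))
  · intro s hs
    simp only [Finset.mem_coe, Finset.mem_filter, Finset.mem_univ, true_and] at hs
    obtain ⟨hc, hind⟩ := hs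
    rw [Finset.mem_coe, mem_cycNat]
    refine ⟨?_, ?_, ?_, ?_⟩
    · intro x hx
      simp only [Finset.mem_image] at hx
      obtain ⟨v, -, rfl⟩ := hx
      simp only [mem_range]
      exact v.isLt
    · rw [Finset.card_image_of_injective _ Fin.val_injective, hc]
    · intro x hx hx1
      simp only [Finset.mem_image] at hx hx1
      obtain ⟨u, hu, rfl⟩ := hx
      obtain ⟨w, hw, hw1⟩ := hx1
      apply hind u hu w hw
      rw [cyc_adj_iff]
      left
      apply Fin.ext
      rw [fin_succ_val, Nat.mod_eq_of_lt (by omega : u.val + 1 < k + 3), hw1]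
    · rintro ⟨h0, hl⟩
      simp only [Finset.mem_image] at h0 hl
      obtain ⟨w, hw, hw0⟩ := h0
      obtain ⟨u, hu, hul⟩ := hl
      apply hind u hu w hw
      rw [cyc_adj_iff]
      left
      apply Fin.ext
      rw [fin_succ_val, hul, hw0,
        show (k + 3 - 1 + 1) = k + 3 by omega, Nat.mod_self]
  · intro t ht
    rw [Finset.mem_coe, mem_cycNat] at ht
    obtain ⟨hsub, hc, hnc, hcyc⟩ := ht
    have htb : ∀ x ∈ t, x < k + 3 := fun x hx => by
      have := hsub hx; simpa [mem_range] using this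
    have himg : ((univ : Finset (Fin (k + 3))).filter (fun v => v.val ∈ t)).image Fin.val
        = t := by
      ext x
      simp only [Finset.mem_image, Finset.mem_filter, Finset.mem_univ, true_and]
      constructor
      · rintro ⟨v, hv, rfl⟩; exact hv
      · intro hx
        exact ⟨⟨x, htb x hx⟩, hx, rfl⟩
    simp only [Finset.mem_coe, Finset.mem_filter, Finset.mem_univ, true_and]
    constructor
    · rw [← Finset.card_image_of_injective _ Fin.val_injective, himg, hc]
    · intro u hu w hw hadj
      rw [cyc_adj_iff] at hadj
      have key : ∀ a b : Fin (k + 3), a.val ∈ t → b.val ∈ t → b = a + 1 → False := by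
        intro a b ha hb hba
        have hb' : b.val = (a.val + 1) % (k + 3) := by rw [hba, fin_succ_val]
        rcases Nat.lt_or_ge (a.val + 1) (k + 3) with h | h
        · rw [Nat.mod_eq_of_lt h] at hb'
          exact hnc a.val ha (hb' ▸ hb)
        · have hav : a.val = k + 2 := by have := a.isLt; omega
          have hb0 : b.val = 0 := by
            rw [hb', hav]
            exact Nat.mod_self (k + 3)
          apply hcyc
          refine ⟨hb0 ▸ hb, ?_⟩
          have heq : k + 3 - 1 = a.val := by omega
          rw [heq]
          exact ha
      rcases hadj with h | h
      · exact key u w hu hw h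
      · exact key w u hw hu h
  · intro s hs
    ext v
    simp only [Finset.mem_filter, Finset.mem_univ, true_and, Finset.mem_image]
    constructor
    · rintro ⟨w, hw, hwv⟩
      rwa [← Fin.val_injective hwv]
    · intro hv; exact ⟨v, hv, rfl⟩
  · intro t ht
    rw [Finset.mem_coe, mem_cycNat] at ht
    have htb : ∀ x ∈ t, x < k + 3 := fun x hx => by
      have := ht.1 hx; simpa [mem_range] using this
    ext x
    simp only [Finset.mem_image, Finset.mem_filter, Finset.mem_univ, true_and]
    constructor
    · rintro ⟨v, hv, rfl⟩; exact hv
    · intro hx; exact ⟨⟨x, htb x hx⟩, hx, rfl⟩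


theorem stmt_2 (n i : ℕ) (hn : 3 ≤ n) (hi : 1 ≤ i) :
    (numIndep (cycleGraph n) i : ℚ) =
      if 2 * i ≤ n then ((n : ℚ) / i) * ((n - i - 1).choose (i - 1)) else 0 := by
  obtain ⟨k, rfl⟩ : ∃ k, n = k + 3 := ⟨n - 3, by omega⟩
  set n := k + 3 with hn3
  have hN : numIndep (cycleGraph n) i =
      (n - i).choose i + (n - i - 1).choose (i - 1) := by
    rw [numIndep_cycle, cycNat_card _ _ (by omega) hi]
  rw [hN]
  by_cases h : 2 * i ≤ n
  · rw [if_pos h]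
    have key : n * ((n - i - 1).choose (i - 1)) =
        i * ((n - i).choose i + (n - i - 1).choose (i - 1)) := by
      have h1 := Nat.add_one_mul_choose_eq (n - i - 1) (i - 1)
      rw [show n - i - 1 + 1 = n - i by omega, show i - 1 + 1 = i by omega] at h1
      have h2 : n = (n - i) + i := by omega
      calc n * ((n - i - 1).choose (i - 1))
          = (n - i) * ((n - i - 1).choose (i - 1))
            + i * ((n - i - 1).choose (i - 1)) := by rw [← add_mul, ← h2]
        _ = (n - i).choose i * i + i * ((n - i - 1).choose (i - 1)) := by rw [h1]
        _ = i * ((n - i).choose i + (n - i - 1).choose (i - 1)) := by ring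
    have hi0 : (i : ℚ) ≠ 0 := Nat.cast_ne_zero.mpr (by omega)
    rw [div_mul_eq_mul_div, eq_comm, div_eq_iff hi0]
    have := congrArg (fun x : ℕ => (x : ℚ)) key
    push_cast at this ⊢
    linarith [this]
  · rw [if_neg h]
    rw [Nat.choose_eq_zero_of_lt (by omega), Nat.choose_eq_zero_of_lt (by omega)]
    simp
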